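/- Let α, β, γ be positive irrational numbers with α + β + γ = 1 and α, β < 1/2. With B̃_β and B̃_γ defined as in the Theorem 3 construction, a positive integer m belongs to B̃_γ if and only if u_m > α and v_m > β and (u_m < 1 - α or v_m < 1 - β), where u_m = {(m+1)α} and v_m = {(m+1)β}. -/

import Mathlib

open scoped Classical

def beatty (α : ℝ) : Set ℤ := {m | ∃ n : ℕ, 0 < n ∧ m = ⌊(n : ℝ) / α⌋}

noncomputable def countLe (S : Set ℤ) (m : ℤ) : ℕ :=
  ((Finset.Icc 1 m).filter (fun k => k ∈ S)).card

noncomputable def btil (α β : ℝ) (n : ℕ) : ℤ :=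
  if ⌊(n : ℝ) / β⌋ ∈ beatty α then ⌊(n : ℝ) / β⌋ - 1 else ⌊(n : ℝ) / β⌋

lemma beatty_mem_iff (α : ℝ) (hirr : Irrational α) (ha : 0 < α)
    (p : ℤ) (hp : 0 < p) :
    p ∈ beatty α ↔ Int.fract (((p:ℝ)+1) * α) < α := by
  constructor
  · rintro ⟨n, hn, rfl⟩
    set p := ⌊(n:ℝ)/α⌋ with hpdef
    have h1 : (p:ℝ) ≤ (n:ℝ)/α := Int.floor_le _
    have h2 : (n:ℝ)/α < p + 1 := Int.lt_floor_add_one _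
    have hpa : (p:ℝ) * α ≤ n := by
      rw [le_div_iff₀ ha] at h1; linarith
    have hna : (n:ℝ) < ((p:ℝ)+1) * α := by
      rw [div_lt_iff₀ ha] at h2; linarith
    have hpne : (p:ℝ) * α ≠ (n:ℝ) := by
      have : Irrational ((p:ℝ) * α) := hirr.intCast_mul hp.ne'
      exact_mod_cast this.ne_int n
    have hlt : (p:ℝ) * α < n := lt_of_le_of_ne hpa hpne
    have hfl : (n:ℤ) ≤ ⌊((p:ℝ)+1) * α⌋ := by
      rw [Int.le_floor]; push_cast; exact hna.le
    have hfl' : (n:ℝ) ≤ (⌊((p:ℝ)+1) * α⌋ : ℝ) := by exact_mod_cast hfl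
    have hfr : Int.fract (((p:ℝ)+1) * α) = ((p:ℝ)+1)*α - ⌊((p:ℝ)+1) * α⌋ := rfl
    linarith
  · intro h
    set N := ⌊((p:ℝ)+1) * α⌋ with hN
    have hfr : Int.fract (((p:ℝ)+1) * α) = ((p:ℝ)+1)*α - N := rfl
    have hNlt : (N:ℝ) < ((p:ℝ)+1) * α := by
      refine lt_of_le_of_ne (Int.floor_le _) ?_
      have hi : Irrational (((p:ℝ)+1) * α) := by
        have := hirr.intCast_mul (show p+1 ≠ 0 by omega)
        push_cast at this ⊢; convert this using 2
      exact (hi.ne_int N).symm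
    have hNgt : (p:ℝ) * α < N := by linarith
    have hNpos : 0 < N := by
      have : (0:ℝ) < N := lt_trans (by positivity) hNgt
      exact_mod_cast this
    refine ⟨N.toNat, by omega, ?_⟩
    have hcast : ((N.toNat : ℕ) : ℝ) = (N:ℝ) := by
      norm_cast; omega
    rw [hcast]
    symm
    rw [Int.floor_eq_iff]
    constructor
    · rw [le_div_iff₀ ha]; linarith
    · rw [div_lt_iff₀ ha]; push_cast; linarith

lemma fract_add_lt_iff (α x : ℝ) (ha : 0 < α) (ha1 : α < 1)
    (hx : Int.fract x + α ≠ 1) :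
    Int.fract (x + α) < α ↔ 1 - α < Int.fract x := by
  have hu0 : 0 ≤ Int.fract x := Int.fract_nonneg x
  have hu1 : Int.fract x < 1 := Int.fract_lt_one x
  have key : Int.fract (x + α) = Int.fract (Int.fract x + α) := by
    conv_lhs => rw [show x + α = (⌊x⌋ : ℝ) + (Int.fract x + α) by rw [Int.fract]; ring]
    rw [Int.fract_intCast_add]
  rcases lt_or_gt_of_ne hx with hlt | hgt
  · rw [key, Int.fract_eq_self.mpr ⟨by linarith, by linarith⟩]
    constructor <;> intro h <;> linarith
  · have : Int.fract (Int.fract x + α) = Int.fract x + α - 1 := by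
      rw [show Int.fract x + α = (Int.fract x + α - 1) + (1:ℤ) by push_cast; ring,
        Int.fract_add_intCast, Int.fract_eq_self.mpr ⟨by linarith, by linarith⟩]
      push_cast; ring
    rw [key, this]
    constructor <;> intro h <;> linarith

lemma btil_mem_iff (α β : ℝ) (x : ℤ) :
    (∃ n : ℕ, 0 < n ∧ x = btil α β n) ↔
      (x ∈ beatty β ∧ x ∉ beatty α) ∨ ((x+1) ∈ beatty β ∧ (x+1) ∈ beatty α) := by
  constructor
  · rintro ⟨n, hn, rfl⟩
    unfold btil
    by_cases hmem : ⌊(n:ℝ)/β⌋ ∈ beatty α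
    · right
      rw [if_pos hmem]
      have : ⌊(n:ℝ)/β⌋ - 1 + 1 = ⌊(n:ℝ)/β⌋ := by ring
      rw [this]
      exact ⟨⟨n, hn, rfl⟩, hmem⟩
    · left
      rw [if_neg hmem]
      exact ⟨⟨n, hn, rfl⟩, hmem⟩
  · rintro (⟨⟨n, hn, hx⟩, hna⟩ | ⟨⟨n, hn, hx⟩, hna⟩)
    · refine ⟨n, hn, ?_⟩
      rw [btil, if_neg (by rw [← hx]; exact hna)]
      exact hx
    · refine ⟨n, hn, ?_⟩
      rw [btil, if_pos (by rw [← hx]; exact hna)]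
      omega

theorem Btgamma_mem_iff (α β γ : ℝ)
    (hirra : Irrational α) (hirrb : Irrational β) (hirrc : Irrational γ)
    (ha : 0 < α) (hb : 0 < β) (hc : 0 < γ) (hsum : α + β + γ = 1)
    (ha2 : α < 1 / 2) (hb2 : β < 1 / 2)
    (Btβ : Set ℤ) (hBtβ : Btβ = {x : ℤ | ∃ n : ℕ, 0 < n ∧ x = btil α β n})
    (Btγ : Set ℤ) (hBtγ : Btγ = {x : ℤ | 0 < x ∧ x ∉ beatty α ∧ x ∉ Btβ})
    (m : ℕ) (hm : 0 < m) :
    (m : ℤ) ∈ Btγ ↔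
      α < Int.fract (((m : ℝ) + 1) * α) ∧ β < Int.fract (((m : ℝ) + 1) * β) ∧
        (Int.fract (((m : ℝ) + 1) * α) < 1 - α ∨ Int.fract (((m : ℝ) + 1) * β) < 1 - β) := by
  have ha1 : α < 1 := by linarith
  have hb1 : β < 1 := by linarith
  have hmz : (m:ℤ) ≠ 0 := by exact_mod_cast hm.ne'
  have hmpos : (0:ℤ) < m := by exact_mod_cast hm
  -- irrationality facts
  have hfra : Int.fract (((m:ℝ)+1)*α) = ((m:ℝ)+1)*α - ⌊((m:ℝ)+1)*α⌋ := rfl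
  have hfrb : Int.fract (((m:ℝ)+1)*β) = ((m:ℝ)+1)*β - ⌊((m:ℝ)+1)*β⌋ := rfl
  have huα : Int.fract (((m:ℝ)+1)*α) ≠ α := by
    intro h
    refine (hirra.intCast_mul hmz).ne_int ⌊((m:ℝ)+1)*α⌋ ?_
    push_cast
    linarith
  have hvβ : Int.fract (((m:ℝ)+1)*β) ≠ β := by
    intro h
    refine (hirrb.intCast_mul hmz).ne_int ⌊((m:ℝ)+1)*β⌋ ?_
    push_cast
    linarith
  have hxα : Int.fract (((m:ℝ)+1)*α) + α ≠ 1 := by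
    intro h
    refine (hirra.intCast_mul (show (m:ℤ)+2 ≠ 0 by omega)).ne_int (⌊((m:ℝ)+1)*α⌋ + 1) ?_
    push_cast
    linarith
  have hxβ : Int.fract (((m:ℝ)+1)*β) + β ≠ 1 := by
    intro h
    refine (hirrb.intCast_mul (show (m:ℤ)+2 ≠ 0 by omega)).ne_int (⌊((m:ℝ)+1)*β⌋ + 1) ?_
    push_cast
    linarith
  have hu1a : Int.fract (((m:ℝ)+1)*α) ≠ 1 - α := fun h => hxα (by rw [h]; ring)
  have hv1b : Int.fract (((m:ℝ)+1)*β) ≠ 1 - β := fun h => hxβ (by rw [h]; ring)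
  -- membership characterizations
  have e1 : ((m:ℤ) ∈ beatty α) ↔ Int.fract (((m:ℝ)+1)*α) < α := by
    have := beatty_mem_iff α hirra ha (m:ℤ) hmpos
    push_cast at this; exact this
  have f1 : ((m:ℤ) ∈ beatty β) ↔ Int.fract (((m:ℝ)+1)*β) < β := by
    have := beatty_mem_iff β hirrb hb (m:ℤ) hmpos
    push_cast at this; exact this
  have e2 : (((m:ℤ)+1) ∈ beatty α) ↔ 1 - α < Int.fract (((m:ℝ)+1)*α) := by
    have h := beatty_mem_iff α hirra ha ((m:ℤ)+1) (by omega)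
    push_cast at h
    rw [show ((m:ℝ)+1+1)*α = ((m:ℝ)+1)*α + α by ring] at h
    rw [h, fract_add_lt_iff α _ ha ha1 hxα]
  have f2 : (((m:ℤ)+1) ∈ beatty β) ↔ 1 - β < Int.fract (((m:ℝ)+1)*β) := by
    have h := beatty_mem_iff β hirrb hb ((m:ℤ)+1) (by omega)
    push_cast at h
    rw [show ((m:ℝ)+1+1)*β = ((m:ℝ)+1)*β + β by ring] at h
    rw [h, fract_add_lt_iff β _ hb hb1 hxβ]
  have hBt : ((m:ℤ) ∈ Btβ) ↔
      (((m:ℤ) ∈ beatty β) ∧ (m:ℤ) ∉ beatty α) ∨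
        ((((m:ℤ)+1) ∈ beatty β) ∧ ((m:ℤ)+1) ∈ beatty α) := by
    rw [hBtβ, Set.mem_setOf_eq, btil_mem_iff]
  rw [hBtγ, Set.mem_setOf_eq, hBt, e1, e2, f1, f2]
  set u := Int.fract (((m:ℝ)+1)*α)
  set v := Int.fract (((m:ℝ)+1)*β)
  have t1 : ¬ (u < α) ↔ α < u :=
    ⟨fun h => lt_of_le_of_ne (not_lt.mp h) (Ne.symm huα), fun h => not_lt.mpr h.le⟩
  have t2 : ¬ (v < β) ↔ β < v :=
    ⟨fun h => lt_of_le_of_ne (not_lt.mp h) (Ne.symm hvβ), fun h => not_lt.mpr h.le⟩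
  have t3 : ¬ (1 - α < u) ↔ u < 1 - α :=
    ⟨fun h => lt_of_le_of_ne (not_lt.mp h) hu1a, fun h => not_lt.mpr h.le⟩
  have t4 : ¬ (1 - β < v) ↔ v < 1 - β :=
    ⟨fun h => lt_of_le_of_ne (not_lt.mp h) hv1b, fun h => not_lt.mpr h.le⟩
  constructor
  · rintro ⟨-, h1, h2⟩
    push_neg at h2
    refine ⟨t1.mp h1, ?_, ?_⟩
    · exact t2.mp (fun hv => h1 (h2.1 hv))
    · rcases (em (1 - β < v)) with hd | hd
      · exact Or.inl (lt_of_le_of_ne (h2.2 hd) hu1a)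
      · exact Or.inr (t4.mp hd)
  · rintro ⟨h1, h2, h3⟩
    refine ⟨hmpos, t1.mpr h1, ?_⟩
    rintro (⟨hv, -⟩ | ⟨hd, he⟩)
    · exact (t2.mpr h2) hv
    · rcases h3 with h3 | h3
      · exact (t3.mpr h3) he
      · exact (t4.mpr h3) hd
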